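/- Let n ≥ 1, let p₁,…,pₙ be positive integers with lcm d, and let m be the number of indices ℓ with p_ℓ = d. Then the number of n-tuples (i₁,…,iₙ), 0 ≤ i_ℓ < p_ℓ, with ∑_ℓ i_ℓ/p_ℓ = 1/d equals m: the solutions are exactly those with i_ℓ = 1 for a single ℓ with p_ℓ = d and i_ℓ = 0 otherwise. -/

import Mathlib

/-- The solutions of ∑_ℓ i_ℓ/p_ℓ = 1/d (d = lcm of the p_ℓ, here d > 1 since
the relevant diffeomorphism is nontrivial) with 0 ≤ i_ℓ < p_ℓ are exactly the
tuples with i_ℓ = 1 at a single index ℓ with p_ℓ = d and i_ℓ = 0 elsewhere;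
in particular their number is #{ℓ : p_ℓ = d}. -/
theorem stmt_17 (n : ℕ) (hn : 1 ≤ n) (p : Fin n → ℕ) (hp : ∀ ℓ, 0 < p ℓ)
    (d : ℕ) (hd : d = Finset.univ.lcm p) (hd1 : 1 < d) :
    {i : Fin n → ℕ | (∀ ℓ, i ℓ < p ℓ) ∧ ∑ ℓ, (i ℓ : ℚ) / (p ℓ : ℚ) = 1 / (d : ℚ)}
      = {i : Fin n → ℕ | ∃ ℓ₀, p ℓ₀ = d ∧ i ℓ₀ = 1 ∧ ∀ ℓ, ℓ ≠ ℓ₀ → i ℓ = 0} ∧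
    {i : Fin n → ℕ | (∀ ℓ, i ℓ < p ℓ) ∧ ∑ ℓ, (i ℓ : ℚ) / (p ℓ : ℚ) = 1 / (d : ℚ)}.ncard
      = (Finset.univ.filter fun ℓ => p ℓ = d).card := by
  have hdvd : ∀ ℓ, p ℓ ∣ d := fun ℓ => hd ▸ Finset.dvd_lcm (Finset.mem_univ ℓ)
  have hd0 : 0 < d := lt_trans one_pos hd1
  have hdq : (d : ℚ) ≠ 0 := by positivity
  have hpq : ∀ ℓ, (p ℓ : ℚ) ≠ 0 := fun ℓ => Nat.cast_ne_zero.mpr (hp ℓ).ne'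
  have hcast : ∀ ℓ, ((d / p ℓ : ℕ) : ℚ) = (d : ℚ) / (p ℓ : ℚ) := fun ℓ =>
    Nat.cast_div (hdvd ℓ) (hpq ℓ)
  have hqpos : ∀ ℓ, 0 < d / p ℓ := fun ℓ =>
    Nat.div_pos (Nat.le_of_dvd hd0 (hdvd ℓ)) (hp ℓ)
  have hset : {i : Fin n → ℕ | (∀ ℓ, i ℓ < p ℓ) ∧
      ∑ ℓ, (i ℓ : ℚ) / (p ℓ : ℚ) = 1 / (d : ℚ)}
      = {i : Fin n → ℕ | ∃ ℓ₀, p ℓ₀ = d ∧ i ℓ₀ = 1 ∧ ∀ ℓ, ℓ ≠ ℓ₀ → i ℓ = 0} := by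
    ext i
    constructor
    · rintro ⟨h1, h2⟩
      -- natural-number version of the sum
      have hsum : ∑ ℓ, i ℓ * (d / p ℓ) = 1 := by
        have : ((∑ ℓ, i ℓ * (d / p ℓ) : ℕ) : ℚ) = 1 := by
          push_cast [hcast]
          rw [Finset.sum_congr rfl (fun ℓ _ => by
            field_simp : ∀ ℓ ∈ Finset.univ,
              (i ℓ : ℚ) * ((d : ℚ) / (p ℓ : ℚ)) = (d : ℚ) * ((i ℓ : ℚ) / (p ℓ : ℚ)))]
          rw [← Finset.mul_sum, h2]
          field_simp
        exact_mod_cast this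
      -- some term is positive
      have hex : ∃ ℓ₀, 0 < i ℓ₀ * (d / p ℓ₀) := by
        by_contra h
        push_neg at h
        simp only [Nat.le_zero] at h
        rw [Finset.sum_eq_zero (fun ℓ _ => h ℓ)] at hsum
        exact one_ne_zero hsum.symm
      obtain ⟨ℓ₀, hℓ₀⟩ := hex
      have hle : i ℓ₀ * (d / p ℓ₀) ≤ 1 := hsum ▸
        Finset.single_le_sum (f := fun ℓ => i ℓ * (d / p ℓ))
          (fun _ _ => Nat.zero_le _) (Finset.mem_univ ℓ₀)
      have heq1 : i ℓ₀ * (d / p ℓ₀) = 1 := le_antisymm hle hℓ₀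
      have hi1 : i ℓ₀ = 1 := Nat.eq_one_of_mul_eq_one_right heq1
      have hq1 : d / p ℓ₀ = 1 := Nat.eq_one_of_mul_eq_one_left heq1
      have hpd : p ℓ₀ = d := by
        have := Nat.div_mul_cancel (hdvd ℓ₀)
        rw [hq1, one_mul] at this
        exact this
      refine ⟨ℓ₀, hpd, hi1, fun ℓ hℓ => ?_⟩
      have hrest : ∑ ℓ ∈ Finset.univ.erase ℓ₀, i ℓ * (d / p ℓ) = 0 := by
        have := Finset.add_sum_erase Finset.univ (fun ℓ => i ℓ * (d / p ℓ))
          (Finset.mem_univ ℓ₀)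
        omega
      have h0 : i ℓ * (d / p ℓ) = 0 :=
        Finset.sum_eq_zero_iff.mp hrest ℓ (Finset.mem_erase.mpr ⟨hℓ, Finset.mem_univ ℓ⟩)
      rcases Nat.mul_eq_zero.mp h0 with h | h
      · exact h
      · exact absurd h (hqpos ℓ).ne'
    · rintro ⟨ℓ₀, hpd, hi1, hrest⟩
      refine ⟨fun ℓ => ?_, ?_⟩
      · by_cases hℓ : ℓ = ℓ₀
        · subst hℓ; omega
        · rw [hrest ℓ hℓ]; exact hp ℓ
      · rw [Finset.sum_eq_single ℓ₀ (fun ℓ _ hℓ => by rw [hrest ℓ hℓ]; simp)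
          (fun h => absurd (Finset.mem_univ ℓ₀) h)]
        rw [hi1, hpd]
        push_cast
        ring
  refine ⟨hset, ?_⟩
  rw [hset]
  have himg : {i : Fin n → ℕ | ∃ ℓ₀, p ℓ₀ = d ∧ i ℓ₀ = 1 ∧ ∀ ℓ, ℓ ≠ ℓ₀ → i ℓ = 0}
      = (fun ℓ₀ ℓ => if ℓ = ℓ₀ then 1 else 0) '' {ℓ₀ | p ℓ₀ = d} := by
    ext i
    constructor
    · rintro ⟨ℓ₀, hpd, hi1, hrest⟩
      exact ⟨ℓ₀, hpd, funext fun ℓ => by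
        by_cases hℓ : ℓ = ℓ₀ <;> simp [hℓ, hi1, hrest ℓ]⟩
    · rintro ⟨ℓ₀, hpd, rfl⟩
      exact ⟨ℓ₀, hpd, by simp, fun ℓ hℓ => by simp [hℓ]⟩
  rw [himg, Set.ncard_image_of_injOn (fun a _ b _ hab => by
    by_contra hne
    have := congrFun hab a
    simp [hne] at this)]
  have : {ℓ₀ | p ℓ₀ = d} = ↑(Finset.univ.filter fun ℓ => p ℓ = d) := by
    ext ℓ; simp
  rw [this, Set.ncard_coe_finset]
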